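/- arXiv:2005.13416 — 3 statements merged into one kernel-verified Lean document; each statement's English description precedes it below -/
import Mathlib

section
/- The rectangle index does not satisfy depth relevance: there exists a score vector x and a splitting of one of its entries into two positive parts (placed in that race and a newly added race, the result re-sorted in nonincreasing order) such that the rectangle index strictly increases. Concretely, for x = (5, 2), splitting the entry 5 into 3 and 2 yields y = (3, 2, 2) with R(x) = 5 < 6 = R(y), even though both vectors have total sum 7. -/
/-- The Euclidean index of a score vector: `sqrt (∑ i, x i ^ 2)`. -/
noncomputable def euclid {n : ℕ} (x : Fin n → ℝ) : ℝ :=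
  Real.sqrt (∑ i, x i ^ 2)

/-- The rectangle index of a score vector: `max_{1 ≤ i ≤ n} i * x_i`
(here position `i : Fin n` counts as place `i+1`). -/
noncomputable def rect {n : ℕ} (x : Fin n → ℝ) : ℝ :=
  ⨆ i : Fin n, ((i : ℕ) + 1 : ℝ) * x i

lemma rect2 : rect ![(5 : ℝ), 2] = 5 := by
  apply le_antisymm
  · apply ciSup_le
    intro i
    fin_cases i <;> norm_num
  · have := le_ciSup (f := fun i : Fin 2 => ((i : ℕ) + 1 : ℝ) * ![(5:ℝ),2] i)
      (Set.Finite.bddAbove (Set.finite_range _)) 0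
    norm_num [rect] at this ⊢; convert this using 2 <;> norm_num

lemma rect3 : rect ![(3 : ℝ), 2, 2] = 6 := by
  apply le_antisymm
  · apply ciSup_le
    intro i
    fin_cases i <;> norm_num
  · have := le_ciSup (f := fun i : Fin 3 => ((i : ℕ) + 1 : ℝ) * ![(3:ℝ),2,2] i)
      (Set.Finite.bddAbove (Set.finite_range _)) 2
    norm_num [rect] at this ⊢; convert this using 2 <;> norm_num [Matrix.cons_val_two, Matrix.vecHead, Matrix.vecTail]

theorem rect_not_depth_relevant :
    rect ![(5 : ℝ), 2] = 5 ∧ rect ![(3 : ℝ), 2, 2] = 6 ∧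
    rect ![(5 : ℝ), 2] < rect ![(3 : ℝ), 2, 2] ∧
    (∑ i, ![(5 : ℝ), 2] i) = 7 ∧ (∑ i, ![(3 : ℝ), 2, 2] i) = 7 := by
  refine ⟨rect2, rect3, ?_, ?_, ?_⟩
  · rw [rect2, rect3]; norm_num
  · simp [Fin.sum_univ_two]; norm_num
  · simp [Fin.sum_univ_three]; norm_num
end

section
/- The rectangle index does not satisfy directional consistency: there exist score vectors x, y, d in ℝ^3 with nonnegative entries and a real λ > 1 such that R(x) = R(y) and R(x + d) = R(y + d) but R(x + λ·d) ≠ R(y + λ·d). Concretely, for x = (3, 3, 0), y = (2, 2, 2), d = (1, 0, 0) and λ = 4: R(x) = R(y) = 6 and R(x + d) = R(y + d) = 6, yet R(x + 4d) = 7 ≠ 6 = R(y + 4d). -/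
lemma iSup_fin3 (f : Fin 3 → ℝ) : (⨆ i, f i) = max (f 0) (max (f 1) (f 2)) := by
  apply le_antisymm
  · apply ciSup_le
    intro i
    fin_cases i
    · exact le_max_left _ _
    · exact le_trans (le_max_left _ _) (le_max_right _ _)
    · exact le_trans (le_max_right _ _) (le_max_right _ _)
  · apply max_le
    · exact le_ciSup (Finite.bddAbove_range f) 0
    · exact max_le (le_ciSup (Finite.bddAbove_range f) 1)
        (le_ciSup (Finite.bddAbove_range f) 2)

lemma rect3_s15 (x : Fin 3 → ℝ) :
    rect x = max (1 * x 0) (max (2 * x 1) (3 * x 2)) := by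
  rw [rect, iSup_fin3 (fun i : Fin 3 => ((i : ℕ) + 1 : ℝ) * x i)]
  norm_num

theorem rect_not_directionally_consistent :
    rect ![(3 : ℝ), 3, 0] = 6 ∧ rect ![(2 : ℝ), 2, 2] = 6 ∧
    rect (fun i => ![(3 : ℝ), 3, 0] i + ![(1 : ℝ), 0, 0] i) = 6 ∧
    rect (fun i => ![(2 : ℝ), 2, 2] i + ![(1 : ℝ), 0, 0] i) = 6 ∧
    rect (fun i => ![(3 : ℝ), 3, 0] i + 4 * ![(1 : ℝ), 0, 0] i) = 7 ∧
    rect (fun i => ![(2 : ℝ), 2, 2] i + 4 * ![(1 : ℝ), 0, 0] i) = 6 ∧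
    rect (fun i => ![(3 : ℝ), 3, 0] i + 4 * ![(1 : ℝ), 0, 0] i) ≠
      rect (fun i => ![(2 : ℝ), 2, 2] i + 4 * ![(1 : ℝ), 0, 0] i) := by
  simp only [rect3_s15]
  norm_num [Matrix.cons_val_zero, Matrix.cons_val_one, Matrix.cons_val_two, Matrix.head_cons]
end

section
/- The Euclidean index does not satisfy uniform equivalence: there exists a score vector x such that no uniform score vector dominated by x has the same Euclidean index as x. Concretely, for x = (2, 1) and any k ∈ {1, 2} and any v ≥ 0 with v ≤ x_i for all i ≤ k, the uniform vector u of length k with all entries equal to v satisfies E(u) = v·sqrt(k) ≤ 2 < sqrt(5) = E(x). -/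
lemma euclid_x : euclid ![(2 : ℝ), 1] = Real.sqrt 5 := by
  unfold euclid
  norm_num [Fin.sum_univ_two]

lemma euclid_const {k : ℕ} (v : ℝ) (hv : 0 ≤ v) :
    euclid (fun _ : Fin k => v) = v * Real.sqrt k := by
  unfold euclid
  rw [Finset.sum_const, Finset.card_univ, Fintype.card_fin, nsmul_eq_mul,
    Real.sqrt_mul (Nat.cast_nonneg k), Real.sqrt_sq hv, mul_comm]

theorem euclid_not_uniform_equivalent :
    euclid ![(2 : ℝ), 1] = Real.sqrt 5 ∧
    ∀ k : ℕ, 1 ≤ k → k ≤ 2 →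
      ∀ v : ℝ, 0 ≤ v → (∀ i : Fin 2, (i : ℕ) < k → v ≤ ![(2 : ℝ), 1] i) →
        euclid (fun _ : Fin k => v) = v * Real.sqrt k ∧
        euclid (fun _ : Fin k => v) ≤ 2 ∧
        (2 : ℝ) < euclid ![(2 : ℝ), 1] := by
  refine ⟨euclid_x, fun k hk1 hk2 v hv hdom => ⟨euclid_const v hv, ?_, ?_⟩⟩
  · rw [euclid_const v hv]
    interval_cases k
    · have h0 := hdom ⟨0, by norm_num⟩ (by norm_num)
      simp at h0
      simpa using (by linarith : v * 1 ≤ 2)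
    · have h1 := hdom ⟨1, by norm_num⟩ (by norm_num)
      simp at h1
      have : Real.sqrt 2 ≤ 2 := by
        nlinarith [Real.sq_sqrt (by norm_num : (0:ℝ) ≤ 2), Real.sqrt_nonneg (2:ℝ)]
      calc v * Real.sqrt 2 ≤ 1 * Real.sqrt 2 := by
            apply mul_le_mul_of_nonneg_right h1 (Real.sqrt_nonneg _)
        _ = Real.sqrt 2 := one_mul _
        _ ≤ 2 := this
  · rw [euclid_x]
    nlinarith [Real.sq_sqrt (by norm_num : (0:ℝ) ≤ 5), Real.sqrt_nonneg (5:ℝ)]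
end
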